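/- arXiv:2402.16232 — 8 statements merged into one kernel-verified Lean document; each statement's English description precedes it below -/
import Mathlib

section
/- Suppose affine polynomials γ_x, γ_y on ℝⁿ satisfy γ_x ∼_M γ_y, i.e. γ_x(x) - γ_y(x) ≥ (1/(2M))‖∇γ_x - ∇γ_y‖² and γ_y(y) - γ_x(y) ≥ (1/(2M))‖∇γ_x - ∇γ_y‖². Then γ_y(y) - γ_x(y) ≤ M‖y - x‖² and γ_x(x) - γ_y(x) ≤ M‖y - x‖². -/
open scoped RealInnerProductSpace

/-- If `γ_x ∼_M γ_y` then the two jet differences are bounded above by `M‖y - x‖²`. -/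
theorem jet_diff_upper_bound {n : ℕ} (M : ℝ) (hM : 0 < M)
    (x y : EuclideanSpace ℝ (Fin n)) (ax ay : ℝ)
    (vx vy : EuclideanSpace ℝ (Fin n))
    (h1 : (ax + ⟪vx, x⟫) - (ay + ⟪vy, x⟫) ≥ (1 / (2 * M)) * ‖vx - vy‖ ^ 2)
    (h2 : (ay + ⟪vy, y⟫) - (ax + ⟪vx, y⟫) ≥ (1 / (2 * M)) * ‖vx - vy‖ ^ 2) :
    (ay + ⟪vy, y⟫) - (ax + ⟪vx, y⟫) ≤ M * ‖y - x‖ ^ 2 ∧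
    (ax + ⟪vx, x⟫) - (ay + ⟪vy, x⟫) ≤ M * ‖y - x‖ ^ 2 := by
  have hid : ((ay + ⟪vy, y⟫) - (ax + ⟪vx, y⟫)) + ((ax + ⟪vx, x⟫) - (ay + ⟪vy, x⟫))
      = ⟪vx - vy, x - y⟫ := by
    simp [inner_sub_left, inner_sub_right]; ring
  have hcs : ⟪vx - vy, x - y⟫ ≤ ‖vx - vy‖ * ‖x - y‖ := real_inner_le_norm _ _
  have hnorm : ‖x - y‖ = ‖y - x‖ := norm_sub_rev _ _
  rw [hnorm] at hcs
  have hs : (0:ℝ) ≤ ‖vx - vy‖ := norm_nonneg _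
  have ht : (0:ℝ) ≤ ‖y - x‖ := norm_nonneg _
  have key := sq_nonneg (‖vx - vy‖ - M * ‖y - x‖)
  have h1' : ‖vx - vy‖ ^ 2 ≤ 2 * M * ((ax + ⟪vx, x⟫) - (ay + ⟪vy, x⟫)) := by
    rw [ge_iff_le, div_mul_eq_mul_div, div_le_iff₀ (by positivity)] at h1
    linarith
  have h2' : ‖vx - vy‖ ^ 2 ≤ 2 * M * ((ay + ⟪vy, y⟫) - (ax + ⟪vx, y⟫)) := by
    rw [ge_iff_le, div_mul_eq_mul_div, div_le_iff₀ (by positivity)] at h2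
    linarith
  constructor
  · nlinarith [h1', hcs, hid, key, hM]
  · nlinarith [h2', hcs, hid, key, hM]
end

section
/- Let x < y < z be real numbers and let γ_x, γ_y, γ_z be affine functions on ℝ. If γ_x ∼_M γ_y and γ_y ∼_M γ_z, then γ_x ∼_M γ_z. -/
/-- One-dimensional transitivity of the relation `∼_M` for ordered base points.
An affine function with base point `a` is `t ↦ p + s * (t - a)`. -/
theorem rel_trans_one_dim (M : ℝ) (hM : 0 < M)
    (x y z : ℝ) (hxy : x < y) (hyz : y < z)
    (px py pz sx sy sz : ℝ)
    (hxy1 : px - (py + sy * (x - y)) ≥ (1 / (2 * M)) * (sx - sy) ^ 2)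
    (hxy2 : py - (px + sx * (y - x)) ≥ (1 / (2 * M)) * (sx - sy) ^ 2)
    (hyz1 : py - (pz + sz * (y - z)) ≥ (1 / (2 * M)) * (sy - sz) ^ 2)
    (hyz2 : pz - (py + sy * (z - y)) ≥ (1 / (2 * M)) * (sy - sz) ^ 2) :
    px - (pz + sz * (x - z)) ≥ (1 / (2 * M)) * (sx - sz) ^ 2 ∧
    pz - (px + sx * (z - x)) ≥ (1 / (2 * M)) * (sx - sz) ^ 2 := by
  have h2M : (0:ℝ) < 2 * M := by linarith
  have fwd : ∀ q r : ℝ, (1/(2*M)) * q ≤ r → q ≤ r * (2*M) := by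
    intro q r h
    rw [div_mul_eq_mul_div, one_mul, div_le_iff₀ h2M] at h
    exact h
  have bwd : ∀ q r : ℝ, q ≤ r * (2*M) → (1/(2*M)) * q ≤ r := by
    intro q r h
    rw [div_mul_eq_mul_div, one_mul, div_le_iff₀ h2M]
    exact h
  have H1 := fwd _ _ hxy1
  have H2 := fwd _ _ hxy2
  have H3 := fwd _ _ hyz1
  have H4 := fwd _ _ hyz2
  have hsx : sx ≤ sy := by nlinarith [H1, H2, sq_nonneg (sx - sy), mul_pos (sub_pos.mpr hxy) hM]
  have hsz : sy ≤ sz := by nlinarith [H3, H4, sq_nonneg (sy - sz), mul_pos (sub_pos.mpr hyz) hM]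
  have hA : sy - sx ≤ M * (y - x) := by
    rcases eq_or_lt_of_le hsx with h | h
    · have : (0:ℝ) < M * (y - x) := by
        apply mul_pos hM; linarith
      linarith
    · nlinarith [H1, H2]
  have hB : sz - sy ≤ M * (z - y) := by
    rcases eq_or_lt_of_le hsz with h | h
    · have : (0:ℝ) < M * (z - y) := by
        apply mul_pos hM; linarith
      linarith
    · nlinarith [H3, H4]
  constructor
  · apply bwd
    linarith [H1, H3, mul_le_mul_of_nonneg_right hA (show (0:ℝ) ≤ sz - sy by linarith)]
  · apply bwd
    linarith [H2, H4, mul_le_mul_of_nonneg_right hB (show (0:ℝ) ≤ sy - sx by linarith)]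
end

section
/- Let x, y ∈ ℝ be distinct, f defined at x and y, M > 0, and let γ_x be an affine function with γ_x(x) = f(x) satisfying 0 ≤ (D − γ_x')(y − x) ≤ (M/2)(y − x)², where D = (f(y)−f(x))/(y−x). Define γ_y affine with γ_y(y) = f(y) and slope γ_y' = γ_x' + sign(y−x)·√(2M|D − γ_x'||y − x|). Then γ_x ∼_M γ_y, i.e. f(x) − γ_y(x) ≥ (1/(2M))|γ_x' − γ_y'|² and f(y) − γ_x(y) ≥ (1/(2M))|γ_x' − γ_y'|². -/
/-- Lemma 4.3 ('areflm'): given a jet at `x` compatible with the divided difference,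
the explicit jet at `y` with slope `γ_x' + sign(y−x)·√(2M|D − γ_x'||y − x|)`
satisfies `γ_x ∼_M γ_y`. -/
theorem compatible_jet_construction (M : ℝ) (hM : 0 < M)
    (x y fx fy sx : ℝ) (hxy : x ≠ y)
    (hs : 0 ≤ ((fy - fx) / (y - x) - sx) * (y - x) ∧
          ((fy - fx) / (y - x) - sx) * (y - x) ≤ (M / 2) * (y - x) ^ 2) :
    let D := (fy - fx) / (y - x)
    let sy := sx + Real.sign (y - x) * Real.sqrt (2 * M * |D - sx| * |y - x|)
    fx - (fy + sy * (x - y)) ≥ (1 / (2 * M)) * (sx - sy) ^ 2 ∧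
    fy - (fx + sx * (y - x)) ≥ (1 / (2 * M)) * (sx - sy) ^ 2 := by
  intro D sy
  have hD : D = (fy - fx) / (y - x) := rfl
  have hsy : sy = sx + Real.sign (y - x) * Real.sqrt (2 * M * |D - sx| * |y - x|) := rfl
  clear_value sy
  obtain ⟨h1, h2⟩ := hs
  have hh0 : y - x ≠ 0 := sub_ne_zero.mpr (Ne.symm hxy)
  set E : ℝ := D - sx with hE
  clear_value D
  clear_value E
  set s : ℝ := Real.sqrt (2 * M * |E| * |y - x|) with hsdef
  clear_value s
  have habs : |E| * |y - x| = E * (y - x) := by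
    rw [← abs_mul]; exact abs_of_nonneg h1
  have hs0 : 0 ≤ s := hsdef ▸ Real.sqrt_nonneg _
  have hsgn : Real.sign (y - x) * (y - x) = |y - x| := by
    rcases lt_or_gt_of_ne hh0 with hn | hp
    · rw [Real.sign_of_neg hn, abs_of_neg hn]; ring
    · rw [Real.sign_of_pos hp, abs_of_pos hp]; ring
  have hsq : s ^ 2 = 2 * M * (E * (y - x)) := by
    rw [hsdef, Real.sq_sqrt, mul_assoc, habs]
    positivity
  have hsgn2 : Real.sign (y - x) ^ 2 = 1 := by
    rcases lt_or_gt_of_ne hh0 with hn | hp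
    · rw [Real.sign_of_neg hn]; ring
    · rw [Real.sign_of_pos hp]; ring
  have hdiff : (sx - sy) ^ 2 = 2 * M * (E * (y - x)) := by
    have : (sx - sy) ^ 2 = Real.sign (y - x) ^ 2 * s ^ 2 := by
      rw [hsy]; ring
    rw [this, hsgn2, one_mul, hsq]
  have hEh : E * (y - x) = fy - fx - sx * (y - x) := by
    rw [hE, hD]; field_simp
  have hkey : (1 / (2 * M)) * (sx - sy) ^ 2 = E * (y - x) := by
    rw [hdiff]; field_simp
  constructor
  · -- need fx - (fy + sy * (x - y)) ≥ E * (y - x)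
    rw [ge_iff_le, hkey]
    have hexp : fx - (fy + sy * (x - y)) = s * |y - x| - E * (y - x) := by
      rw [hsy]
      have : sy * (x - y) = -(sx * (y - x)) - Real.sign (y - x) * (y - x) * s := by
        rw [hsy]; ring
      rw [hsgn] at this
      nlinarith [hEh]
    rw [hexp]
    -- need 2 * E * (y-x) ≤ s * |y - x|
    have h2' : 2 * (E * (y - x)) ≤ M * (y - x) ^ 2 := by linarith
    have hsqle : (2 * (E * (y - x))) ^ 2 ≤ (s * |y - x|) ^ 2 := by
      have heq : (s * |y - x|) ^ 2 = 2 * M * (E * (y - x)) * (y - x) ^ 2 := by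
        rw [mul_pow, hsq, sq_abs]
      rw [heq]; nlinarith
    have := Real.sqrt_le_sqrt hsqle
    rw [Real.sqrt_sq (by linarith), Real.sqrt_sq (mul_nonneg hs0 (abs_nonneg _))] at this
    linarith
  · rw [ge_iff_le, hkey, hEh]; linarith
end

section
/- Let E ⊂ ℝⁿ be closed, f : E → ℝ, M ≥ η > 0, and p, q ∈ (1,∞) with 1/p + 1/q = 1. Suppose affine polynomials (γ_x)_{x∈E} satisfy: (i) γ_x(x) = f(x) and γ_x(y) + (η/2)‖y−x‖² ≤ f(y) for all x ∈ E, y ∈ E\{x}; and (ii) γ_x ∼_M γ_y for all x, y ∈ E. For each x define the affine P_x with P_x(x) = f(x) − (η/(2p))‖x‖² and ∇P_x = ∇γ_x − (η/p)x. Then P_x ∼_{qM} P_y for all x, y ∈ E. -/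
open scoped RealInnerProductSpace

/-- Lemma 2.8 ('flexsc'): modifying jets satisfying the strong-convexity separation by
subtracting the quadratic `(η/(2p))‖x‖²` preserves Whitney compatibility with constant `qM`.
Here `γ_x(z) = f x + ⟪G x, z - x⟫` and `P_x(z) = (f x - (η/(2p))‖x‖²) + ⟪G x - (η/p)x, z - x⟫`. -/
theorem jet_modification {n : ℕ}
    (E : Set (EuclideanSpace ℝ (Fin n))) (hE : IsClosed E)
    (f : EuclideanSpace ℝ (Fin n) → ℝ)
    (G : EuclideanSpace ℝ (Fin n) → EuclideanSpace ℝ (Fin n))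
    (M η p q : ℝ) (hη : 0 < η) (hηM : η ≤ M)
    (hp : 1 < p) (hq : 1 < q) (hpq : 1 / p + 1 / q = 1)
    (hsep : ∀ x ∈ E, ∀ y ∈ E, y ≠ x →
      f x + ⟪G x, y - x⟫ + (η / 2) * ‖y - x‖ ^ 2 ≤ f y)
    (hrel : ∀ x ∈ E, ∀ y ∈ E,
      f x - (f y + ⟪G y, x - y⟫) ≥ (1 / (2 * M)) * ‖G x - G y‖ ^ 2) :
    ∀ x ∈ E, ∀ y ∈ E,
      (f x - (η / (2 * p)) * ‖x‖ ^ 2) -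
        ((f y - (η / (2 * p)) * ‖y‖ ^ 2) + ⟪G y - (η / p) • y, x - y⟫) ≥
      (1 / (2 * (q * M))) * ‖(G x - (η / p) • x) - (G y - (η / p) • y)‖ ^ 2 := by
  intro x hx y hy
  by_cases hxy : x = y
  · subst hxy; simp
  · have hp0 : (0:ℝ) < p := by linarith
    have hq0 : (0:ℝ) < q := by linarith
    have hM : (0:ℝ) < M := lt_of_lt_of_le hη hηM
    have hyx : y ≠ x := fun h => hxy h.symm
    have h1 := hsep x hx y hy hyx
    have h2 := hsep y hy x hx hxy
    have hA := hrel x hx y hy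
    set u := G x - G y with hu
    set v := x - y with hv
    -- basic rewrites
    have hinner1 : ⟪G x, y - x⟫ = -⟪G x, v⟫ := by
      rw [hv, ← inner_neg_right, neg_sub]
    have hnyx : ‖y - x‖ = ‖v‖ := by rw [hv, norm_sub_rev]
    rw [hinner1, hnyx] at h1
    have huv : ⟪u, v⟫ = ⟪G x, v⟫ - ⟪G y, v⟫ := by rw [hu, inner_sub_left]
    -- monotonicity
    have hmono : ⟪u, v⟫ ≥ η * ‖v‖^2 := by
      rw [huv]; linarith [h1, h2]
    -- decompose inner product in goal
    have hgin : ⟪G y - (η / p) • y, v⟫ = ⟪G y, v⟫ - (η / p) * ⟪y, v⟫ := by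
      rw [inner_sub_left, real_inner_smul_left]
    -- norm identity
    have hxyv : x = y + v := by rw [hv]; abel
    have hxnorm : ‖x‖^2 = ‖y‖^2 + 2 * ⟪y, v⟫ + ‖v‖^2 := by
      rw [hxyv]; exact norm_add_sq_real y v
    -- the vector in the RHS
    have hvec : (G x - (η / p) • x) - (G y - (η / p) • y) = u - (η / p) • v := by
      rw [hu, hv, smul_sub]; abel
    have hrhs : ‖(G x - (η / p) • x) - (G y - (η / p) • y)‖^2
        = ‖u‖^2 - 2 * ((η / p) * ⟪u, v⟫) + (η / p)^2 * ‖v‖^2 := by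
      rw [hvec, norm_sub_sq_real, real_inner_smul_right, norm_smul,
        Real.norm_eq_abs, abs_of_pos (by positivity : (0:ℝ) < η / p), mul_pow]
    rw [hrhs, hgin, ge_iff_le, hxnorm]
    -- key algebraic inequality
    have hpq' : p + q = p * q := by
      field_simp at hpq; linarith
    have h6 : (q - 1) * p = q := by linear_combination -hpq'
    have hvpos : (0:ℝ) ≤ ‖v‖^2 := by positivity
    have hupos : (0:ℝ) ≤ ‖u‖^2 := by positivity
    set A := f x - (f y + ⟪G y, v⟫) with hAdef
    have hA' : A ≥ (1 / (2 * M)) * ‖u‖^2 := hA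
    have hA1 : ‖u‖^2 ≤ 2 * M * A := by
      rw [ge_iff_le, div_mul_eq_mul_div, div_le_iff₀ (by positivity)] at hA'
      linarith
    have hA2 : η * ‖v‖^2 ≤ 2 * A := by
      have : f y + ⟪G y, v⟫ + (η / 2) * ‖v‖^2 ≤ f x := h2
      rw [hAdef]; linarith
    have hgoal : (1 / (2 * (q * M))) *
        (‖u‖^2 - 2 * ((η / p) * ⟪u, v⟫) + (η / p)^2 * ‖v‖^2)
        ≤ A - (η / (2 * p)) * ‖v‖^2 := by
      have S1 : (0:ℝ) ≤ p^2 * (2 * M * A - ‖u‖^2) :=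
        mul_nonneg (sq_nonneg p) (by linarith [hA1])
      have S2 : (0:ℝ) ≤ 2 * η * p * (⟪u, v⟫ - η * ‖v‖^2) :=
        mul_nonneg (by positivity) (by linarith [hmono])
      have S3 : (0:ℝ) ≤ (q - 1) * M * p^2 * (2 * A - η * ‖v‖^2) :=
        mul_nonneg (mul_nonneg (mul_nonneg (by linarith : (0:ℝ) ≤ q - 1) hM.le)
          (sq_nonneg p)) (by linarith [hA2])
      have S4 : (0:ℝ) ≤ η^2 * (2 * p - 1) * ‖v‖^2 :=
        mul_nonneg (mul_nonneg (sq_nonneg η) (by linarith)) hvpos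
      have h5 : q * M * η * p * ‖v‖^2 = (q - 1) * M * p^2 * η * ‖v‖^2 := by
        linear_combination (-(M * η * p * ‖v‖^2)) * h6
      have hpoly : p^2 * ‖u‖^2 - 2 * η * p * ⟪u, v⟫ + η^2 * ‖v‖^2
          ≤ 2 * q * M * p^2 * A - q * M * η * p * ‖v‖^2 := by linarith [S1, S2, S3, S4, h5]
      rw [div_mul_eq_mul_div, div_le_iff₀ (by positivity)]
      have hpne : p ≠ 0 := ne_of_gt hp0
      have e1 : 1 * (‖u‖^2 - 2 * ((η / p) * ⟪u, v⟫) + (η / p)^2 * ‖v‖^2) * p^2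
          = p^2 * ‖u‖^2 - 2 * η * p * ⟪u, v⟫ + η^2 * ‖v‖^2 := by
        field_simp
      have e2 : ((A - (η / (2 * p)) * ‖v‖^2) * (2 * (q * M))) * p^2
          = 2 * q * M * p^2 * A - q * M * η * p * ‖v‖^2 := by
        field_simp
      have key : 1 * (‖u‖^2 - 2 * ((η / p) * ⟪u, v⟫) + (η / p)^2 * ‖v‖^2) * p^2
          ≤ ((A - (η / (2 * p)) * ‖v‖^2) * (2 * (q * M))) * p^2 := by
        rw [e1, e2]; exact hpoly
      exact le_of_mul_le_mul_right key (by positivity)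
    have hfin : f x - η / (2 * p) * (‖y‖ ^ 2 + 2 * ⟪y, v⟫ + ‖v‖ ^ 2) -
        (f y - η / (2 * p) * ‖y‖ ^ 2 + (⟪G y, v⟫ - η / p * ⟪y, v⟫))
        = A - η / (2 * p) * ‖v‖ ^ 2 := by
      rw [hAdef]; field_simp; ring
    linarith [hgoal, hfin]
end

section
/- Let E ⊂ ℝⁿ be closed, f : E → ℝ, M ≥ η > 0, and p, q ∈ (1,∞) with 1/p + 1/q = 1. Suppose affine polynomials (γ_x)_{x∈E} satisfy γ_x(x) = f(x), γ_x(y) + (η/2)‖y−x‖² ≤ f(y) for all y ∈ E\{x}, and γ_x ∼_M γ_y for all x, y ∈ E. Then there exists an (η/p)-strongly convex function F ∈ C^{1,1}(ℝⁿ) with J_xF = γ_x for all x ∈ E and Lip(∇F) ≤ qM + η/p ≤ (q+1)M. -/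
open scoped RealInnerProductSpace






lemma hasGradientAt_of_squeeze {V : Type*} [NormedAddCommGroup V] [InnerProductSpace ℝ V]
    [CompleteSpace V] (F : V → ℝ) (v x : V) (c : ℝ) (hc : 0 ≤ c)
    (h1 : ∀ z, 0 ≤ F z - F x - ⟪v, z - x⟫)
    (h2 : ∀ z, F z - F x - ⟪v, z - x⟫ ≤ c * ‖z - x‖^2) :
    HasGradientAt F v x := by
  rw [hasGradientAt_iff_hasFDerivAt, hasFDerivAt_iff_isLittleO_nhds_zero]
  rw [Asymptotics.isLittleO_iff]
  intro ε hε
  have hpos : 0 < ε / (c + 1) := by positivity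
  filter_upwards [Metric.ball_mem_nhds (0 : V) hpos] with h hh
  have hz1 := h1 (x + h)
  have hz2 := h2 (x + h)
  simp only [add_sub_cancel_left] at hz1 hz2
  have hball : ‖h‖ < ε / (c + 1) := by simpa [mem_ball_zero_iff] using hh
  have htd : (InnerProductSpace.toDual ℝ V v) h = ⟪v,h⟫ := InnerProductSpace.toDual_apply_apply
  rw [htd]
  have hnn : (0:ℝ) ≤ ‖h‖ := norm_nonneg _
  have : |F (x + h) - F x - ⟪v,h⟫| ≤ c * ‖h‖^2 := by
    rw [abs_le]; constructor <;> nlinarith [sq_nonneg ‖h‖]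
  calc |F (x + h) - F x - ⟪v,h⟫| ≤ c * ‖h‖^2 := this
    _ ≤ ε * ‖h‖ := by
        have h3 : ‖h‖ * (c+1) < ε := by
          rw [← lt_div_iff₀ (by positivity : (0:ℝ) < c+1)]; exact hball
        nlinarith [mul_le_mul_of_nonneg_left h3.le hnn, sq_nonneg ‖h‖]

variable {V : Type*} [NormedAddCommGroup V] [InnerProductSpace ℝ V]

lemma quad_lb (L : ℝ) (hL : 0 < L) (a b : V) :
    -(‖b‖^2/(2*L)) ≤ L/2 * ‖a‖^2 + ⟪b, a⟫ := by
  have hkey : L/2 * ‖a‖^2 + ⟪b, a⟫ + ‖b‖^2/(2*L) = ‖L • a + b‖^2/(2*L) := by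
    rw [norm_add_sq_real, norm_smul, real_inner_smul_left, Real.norm_eq_abs, mul_pow, sq_abs,
      real_inner_comm a b]
    field_simp
  have h0 : 0 ≤ ‖L • a + b‖^2/(2*L) := by positivity
  linarith

set_option maxHeartbeats 1000000 in
theorem aux_ext [CompleteSpace V]
    (E : Set V) (hne : E.Nonempty) (f : V → ℝ) (G : V → V) (L : ℝ) (hL : 0 < L)
    (key : ∀ x ∈ E, ∀ y ∈ E, (1/(2*L)) * ‖G x - G y‖^2 ≤ f x - (f y + ⟪G y, x - y⟫)) :
    ∃ (F : V → ℝ) (g : V → V),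
      (∀ x ∈ E, F x = f x ∧ g x = G x) ∧
      (∀ x z, ⟪g x, z - x⟫ ≤ F z - F x) ∧
      (∀ x z, F z - F x - ⟪g x, z - x⟫ ≤ L/2 * ‖z - x‖^2) ∧
      (∀ a b, ‖g a - g b‖ ≤ L * ‖a - b‖) := by
  obtain ⟨y₀, hy₀⟩ := hne
  set ℓ : V → V → ℝ := fun y w => f y - ⟪G y, y⟫ + ‖G y‖^2/(2*L) + ⟪G y, w⟫ with hℓ
  set C : Set (V × ℝ) := {wt | ∀ y ∈ E, ℓ y wt.1 ≤ wt.2} with hC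
  set Φ : V → V × ℝ → ℝ := fun x wt => wt.2 + L/2 * ‖x - wt.1‖^2 with hΦ
  -- the affine lower bound
  have hlow : ∀ (y w z : V), f y + ⟪G y, z - y⟫ ≤ ℓ y w + L/2 * ‖z - w‖^2 := by
    intro y w z
    have hq := quad_lb L hL (w - z) (G y)
    have h1 : ⟪G y, z - y⟫ = ⟪G y, z⟫ - ⟪G y, y⟫ := inner_sub_right _ _ _
    have h2 : ⟪G y, w - z⟫ = ⟪G y, w⟫ - ⟪G y, z⟫ := inner_sub_right _ _ _
    have h3 : ‖z - w‖ = ‖w - z‖ := norm_sub_rev _ _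
    simp only [hℓ]
    rw [h3]
    rw [h2] at hq
    linarith
  -- key points are in C
  have hkeyC : ∀ x ∈ E, (x - L⁻¹ • G x, f x - ‖G x‖^2/(2*L)) ∈ C := by
    intro x hx
    simp only [hC, Set.mem_setOf_eq]
    intro y hy
    have hk := key x hx y hy
    have e1 : (1/(2*L)) * ‖G x - G y‖^2
        = ‖G x‖^2/(2*L) + ‖G y‖^2/(2*L) - L⁻¹ * ⟪G y, G x⟫ := by
      rw [norm_sub_sq_real, real_inner_comm (G x) (G y)]
      field_simp
      ring
    rw [inner_sub_right] at hk
    show ℓ y (x - L⁻¹ • G x) ≤ f x - ‖G x‖^2/(2*L)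
    simp only [hℓ]
    rw [inner_sub_right, real_inner_smul_right]
    linarith
  have hCne : C.Nonempty := ⟨_, hkeyC y₀ hy₀⟩
  have hSne : ∀ x, (Φ x '' C).Nonempty := fun x => hCne.image _
  have hbdd : ∀ x, BddBelow (Φ x '' C) := by
    intro x
    refine ⟨f y₀ + ⟪G y₀, x - y₀⟫, ?_⟩
    rintro r ⟨wt, hwt, rfl⟩
    have h1 : ℓ y₀ wt.1 ≤ wt.2 := hwt y₀ hy₀
    have h2 := hlow y₀ wt.1 x
    simp only [hℓ] at h1 h2
    simp only [hΦ]
    linarith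
  set Fm : V → ℝ := fun x => sInf (Φ x '' C) with hFm
  have hFm_le : ∀ x, ∀ wt ∈ C, Fm x ≤ Φ x wt :=
    fun x wt h => csInf_le (hbdd x) ⟨wt, h, rfl⟩
  have hFm_ge : ∀ x r, (∀ wt ∈ C, r ≤ Φ x wt) → r ≤ Fm x := by
    intro x r h
    apply le_csInf (hSne x)
    rintro b ⟨wt, hwt, rfl⟩
    exact h wt hwt
  -- midpoint estimate
  have hmid : ∀ (x : V), ∀ u ∈ C, ∀ v ∈ C,
      Fm x ≤ (Φ x u + Φ x v)/2 - L/8 * ‖u.1 - v.1‖^2 := by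
    intro x u hu v hv
    have hmidC : ((1/2:ℝ) • (u.1 + v.1), (u.2 + v.2)/2) ∈ C := by
      simp only [hC, Set.mem_setOf_eq]
      intro y hy
      have h1 := hu y hy
      have h2 := hv y hy
      simp only [hC, Set.mem_setOf_eq, hℓ] at h1 h2 ⊢
      rw [real_inner_smul_right, inner_add_right]
      linarith
    have hle := hFm_le x _ hmidC
    simp only [hΦ] at hle ⊢
    have e : x - (1/2:ℝ) • (u.1 + v.1) = (1/2:ℝ) • ((x - u.1) + (x - v.1)) := by
      rw [smul_add]
      module
    have e2 : ‖u.1 - v.1‖ = ‖(x - v.1) - (x - u.1)‖ := by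
      rw [show (x - v.1) - (x - u.1) = u.1 - v.1 by abel]
    have e3 : ‖x - (1/2:ℝ) • (u.1 + v.1)‖^2
        = (‖x - u.1‖^2 + ‖x - v.1‖^2)/2 - ‖u.1 - v.1‖^2/4 := by
      have par := norm_add_sq_real (x - u.1) (x - v.1)
      have par2 := norm_sub_sq_real (x - v.1) (x - u.1)
      have hcomm : ⟪x - v.1, x - u.1⟫ = ⟪x - u.1, x - v.1⟫ := real_inner_comm _ _
      rw [e, e2, norm_smul, Real.norm_eq_abs, mul_pow, sq_abs]
      linarith [par, par2, hcomm]
    rw [e3] at hle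
    nlinarith [hle]
  -- existence of a minimizer (proximal point)
  have hexists : ∀ x, ∃ wt ∈ C, Φ x wt = Fm x := by
    intro x
    have happrox : ∀ n : ℕ, ∃ wt ∈ C, Φ x wt < Fm x + 1/(n+1) := by
      intro n
      have h1 : Fm x < Fm x + 1/(n+1) := lt_add_of_pos_right _ (by positivity)
      obtain ⟨r, ⟨wt, hwt, rfl⟩, hr⟩ := exists_lt_of_csInf_lt (hSne x) h1
      exact ⟨wt, hwt, hr⟩
    choose s hsC hs using happrox
    have hdistbd : ∀ N n m : ℕ, N ≤ n → N ≤ m →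
        dist ((s n).1) ((s m).1) ≤ Real.sqrt (8/(L*(N+1))) := by
      intro N n m hn hm
      have h1 := hmid x (s n) (hsC n) (s m) (hsC m)
      have hn' : Φ x (s n) < Fm x + 1/(N+1) := by
        refine lt_of_lt_of_le (hs n) (by
          have : (1:ℝ)/(n+1) ≤ 1/(N+1) := by
            apply one_div_le_one_div_of_le (by positivity)
            exact_mod_cast by omega
          linarith)
      have hm' : Φ x (s m) < Fm x + 1/(N+1) := by
        refine lt_of_lt_of_le (hs m) (by
          have : (1:ℝ)/(m+1) ≤ 1/(N+1) := by
            apply one_div_le_one_div_of_le (by positivity)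
            exact_mod_cast by omega
          linarith)
      have hsq : ‖(s n).1 - (s m).1‖^2 ≤ 8/(L*(N+1)) := by
        have h2 : L/8 * ‖(s n).1 - (s m).1‖^2 ≤ 1/(N+1) := by linarith
        have hNp : (0:ℝ) < (N:ℝ)+1 := by positivity
        rw [le_div_iff₀ (by positivity)]
        have h3 := mul_le_mul_of_nonneg_right h2 hNp.le
        have h4 : (1/((N:ℝ)+1))*((N:ℝ)+1) = 1 := by field_simp
        nlinarith [h3]
      rw [dist_eq_norm]
      have := Real.sqrt_le_sqrt hsq
      rwa [Real.sqrt_sq (norm_nonneg _)] at this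
    have hcauchy : CauchySeq (fun n => (s n).1) := by
      refine cauchySeq_of_le_tendsto_0 (fun N => Real.sqrt (8/(L*(N+1))))
        (fun n m N hn hm => hdistbd N n m hn hm) ?_
      · have h8 : Filter.Tendsto (fun N : ℕ => 8/(L*(N+1))) Filter.atTop (nhds 0) := by
          have hbase : Filter.Tendsto (fun N : ℕ => (1:ℝ)/(N+1)) Filter.atTop (nhds 0) :=
            tendsto_one_div_add_atTop_nhds_zero_nat
          have := hbase.const_mul (8/L)
          rw [mul_zero] at this
          convert this using 2 with N
          field_simp
        have := (Real.continuous_sqrt.tendsto 0).comp h8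
        rw [Real.sqrt_zero] at this
        exact this
    obtain ⟨w, hw⟩ := cauchySeq_tendsto_of_complete hcauchy
    have hΦtend : Filter.Tendsto (fun n => Φ x (s n)) Filter.atTop (nhds (Fm x)) := by
      apply tendsto_of_tendsto_of_tendsto_of_le_of_le (g := fun _ => Fm x)
        (h := fun n : ℕ => Fm x + 1/(n+1)) tendsto_const_nhds
      · have hbase : Filter.Tendsto (fun N : ℕ => (1:ℝ)/(N+1)) Filter.atTop (nhds 0) :=
          tendsto_one_div_add_atTop_nhds_zero_nat
        have := tendsto_const_nhds (x := Fm x) (f := Filter.atTop (α := ℕ)) |>.add hbase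
        simpa using this
      · exact fun n => hFm_le x (s n) (hsC n)
      · exact fun n => (hs n).le
    have hnormtend : Filter.Tendsto (fun n => L/2 * ‖x - (s n).1‖^2) Filter.atTop
        (nhds (L/2 * ‖x - w‖^2)) :=
      (((tendsto_const_nhds.sub hw).norm.pow 2).const_mul _)
    set t : ℝ := Fm x - L/2 * ‖x - w‖^2 with ht
    have httend : Filter.Tendsto (fun n => (s n).2) Filter.atTop (nhds t) := by
      have heq : (fun n => (s n).2) = fun n => Φ x (s n) - L/2 * ‖x - (s n).1‖^2 := by
        funext n
        simp only [hΦ]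
        ring
      rw [heq, ht]
      exact hΦtend.sub hnormtend
    refine ⟨(w, t), ?_, by simp only [hΦ, ht]; ring⟩
    simp only [hC, Set.mem_setOf_eq]
    intro y hy
    show ℓ y w ≤ t
    have hly : Filter.Tendsto (fun n => ℓ y (s n).1) Filter.atTop (nhds (ℓ y w)) := by
      simp only [hℓ]
      exact tendsto_const_nhds.add (tendsto_const_nhds.inner hw)
    exact le_of_tendsto_of_tendsto' hly httend (fun n => hsC n y hy)
  choose p hpC hpval using hexists
  set g : V → V := fun x => L • (x - (p x).1) with hg
  have hFx : ∀ x, Fm x = (p x).2 + L/2 * ‖x - (p x).1‖^2 := by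
    intro x
    rw [← hpval x]
  -- subgradient inequality at the proximal point
  have hsubgrad : ∀ x, ∀ wt ∈ C,
      L * ⟪x - (p x).1, wt.1 - (p x).1⟫ ≤ wt.2 - (p x).2 := by
    intro x wt hwt
    set d : V := wt.1 - (p x).1 with hd
    set Δ : ℝ := wt.2 - (p x).2 with hΔ
    have hstep : ∀ θ : ℝ, 0 < θ → θ ≤ 1 →
        L * ⟪x - (p x).1, d⟫ ≤ Δ + θ * (L/2 * ‖d‖^2) := by
      intro θ hθ hθ1
      have hcmb : ((p x).1 + θ • d, (p x).2 + θ * Δ) ∈ C := by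
        simp only [hC, Set.mem_setOf_eq]
        intro y hy
        have h1 := hpC x y hy
        have h2 := hwt y hy
        simp only [hC, Set.mem_setOf_eq, hℓ] at h1 h2 ⊢
        rw [inner_add_right, real_inner_smul_right]
        have e : ⟪G y, d⟫ = ⟪G y, wt.1⟫ - ⟪G y, (p x).1⟫ := by
          rw [hd, inner_sub_right]
        rw [e, hΔ]
        nlinarith [mul_nonneg hθ.le (sub_nonneg.2 h2),
          mul_nonneg (sub_nonneg.2 hθ1) (sub_nonneg.2 h1)]
      have hle := hFm_le x _ hcmb
      rw [hFx x] at hle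
      simp only [hΦ] at hle
      have e : x - ((p x).1 + θ • d) = (x - (p x).1) - θ • d := by module
      have e2 : ‖(x - (p x).1) - θ • d‖^2
          = ‖x - (p x).1‖^2 - 2*(θ*⟪x - (p x).1, d⟫) + θ^2*‖d‖^2 := by
        rw [norm_sub_sq_real, real_inner_smul_right, norm_smul, Real.norm_eq_abs, mul_pow, sq_abs]
      rw [e, e2] at hle
      have h3 : θ * (L * ⟪x - (p x).1, d⟫) ≤ θ * (Δ + θ * (L/2 * ‖d‖^2)) := by nlinarith [hle]
      exact le_of_mul_le_mul_left h3 hθ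
    have hfin : ∀ ε : ℝ, 0 < ε → L * ⟪x - (p x).1, d⟫ ≤ Δ + ε := by
      intro ε hε
      rcases le_or_gt (L/2 * ‖d‖^2) 0 with hc0 | hc0
      · have := hstep 1 one_pos le_rfl
        linarith
      · set θ : ℝ := min 1 (ε / (L/2 * ‖d‖^2)) with hθdef
        have hθpos : 0 < θ := lt_min one_pos (by positivity)
        have h1 := hstep θ hθpos (min_le_left _ _)
        have h2 : θ * (L/2 * ‖d‖^2) ≤ ε := by
          calc θ * (L/2 * ‖d‖^2) ≤ (ε / (L/2 * ‖d‖^2)) * (L/2 * ‖d‖^2) :=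
                mul_le_mul_of_nonneg_right (min_le_right _ _) hc0.le
            _ = ε := div_mul_cancel₀ _ (ne_of_gt hc0)
        linarith
    linarith [le_of_forall_pos_le_add hfin]
  -- global subgradient inequality
  have hlower : ∀ x z, ⟪g x, z - x⟫ ≤ Fm z - Fm x := by
    intro x z
    have hmain : Fm x + ⟪g x, z - x⟫ ≤ Fm z := by
      apply hFm_ge
      intro wt hwt
      have hs := hsubgrad x wt hwt
      have hid : L*⟪x-(p x).1, wt.1-(p x).1⟫ + L/2*‖z - wt.1‖^2
          - L/2*‖x-(p x).1‖^2 - L*⟪x-(p x).1, z-x⟫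
          = L/2 * ‖(x-(p x).1) + (wt.1 - z)‖^2 := by
        have ha1 : ⟪x-(p x).1, wt.1-(p x).1⟫
            = ⟪x-(p x).1, x-(p x).1⟫ + ⟪x-(p x).1, wt.1 - z⟫ + ⟪x-(p x).1, z - x⟫ := by
          rw [← inner_add_right, ← inner_add_right]
          congr 1
          module
        have ha2 : ‖z - wt.1‖ = ‖wt.1 - z‖ := norm_sub_rev _ _
        have ha3 := norm_add_sq_real (x-(p x).1) (wt.1 - z)
        have ha4 : ⟪x-(p x).1, x-(p x).1⟫ = ‖x-(p x).1‖^2 := real_inner_self_eq_norm_sq _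
        rw [ha1, ha2, ha3, ha4]
        ring
      have hnn : (0:ℝ) ≤ L/2 * ‖(x-(p x).1) + (wt.1 - z)‖^2 := by positivity
      have e2 : ⟪g x, z - x⟫ = L * ⟪x - (p x).1, z - x⟫ := real_inner_smul_left _ _ _
      rw [hFx x, e2]
      simp only [hΦ]
      linarith
    linarith
  have hupper : ∀ x z, Fm z - Fm x - ⟪g x, z - x⟫ ≤ L/2 * ‖z - x‖^2 := by
    intro x z
    have h1 := hFm_le z _ (hpC x)
    simp only [hΦ] at h1
    have e : ‖z - (p x).1‖^2 = ‖z-x‖^2 + 2*⟪z-x, x-(p x).1⟫ + ‖x-(p x).1‖^2 := by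
      rw [show z - (p x).1 = (z-x) + (x-(p x).1) by abel, norm_add_sq_real]
    have e2 : ⟪g x, z - x⟫ = L * ⟪x - (p x).1, z - x⟫ := real_inner_smul_left _ _ _
    have e3 : ⟪z-x, x-(p x).1⟫ = ⟪x-(p x).1, z-x⟫ := real_inner_comm _ _
    rw [hFx x, e2]
    rw [e, e3] at h1
    linarith [h1]
  -- values on E
  have hvalE : ∀ x ∈ E, Fm x = f x := by
    intro x hx
    have hle : Fm x ≤ f x := by
      have h1 := hFm_le x _ (hkeyC x hx)
      simp only [hΦ] at h1
      have e : x - (x - L⁻¹ • G x) = L⁻¹ • G x := by module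
      rw [e, norm_smul, Real.norm_eq_abs, abs_of_pos (inv_pos.2 hL)] at h1
      have e2 : L/2 * (L⁻¹ * ‖G x‖)^2 = ‖G x‖^2/(2*L) := by
        field_simp
      rw [mul_pow] at h1
      nlinarith [h1]
    have hge : f x ≤ Fm x := by
      apply hFm_ge
      intro wt hwt
      have h1 := hlow x wt.1 x
      have h2 : ℓ x wt.1 ≤ wt.2 := hwt x hx
      simp only [hΦ]
      simp only [sub_self, inner_zero_right, add_zero] at h1
      simp only [hℓ] at h1 h2
      linarith
    linarith
  -- gradients on E
  have hgradE : ∀ x ∈ E, g x = G x := by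
    intro x hx
    have hsub2 : ∀ z, f x + ⟪G x, z - x⟫ ≤ Fm z := by
      intro z
      apply hFm_ge
      intro wt hwt
      have h1 := hlow x wt.1 z
      have h2 : ℓ x wt.1 ≤ wt.2 := hwt x hx
      simp only [hΦ]
      simp only [hℓ] at h1 h2
      linarith
    set dd : V := G x - g x with hdd
    have hkey2 : L⁻¹ * ‖dd‖^2 ≤ L/2 * (L⁻¹^2 * ‖dd‖^2) := by
      have h1 := hsub2 (x + L⁻¹ • dd)
      have h2 := hupper x (x + L⁻¹ • dd)
      rw [hvalE x hx] at h2
      have e : (x + L⁻¹ • dd) - x = L⁻¹ • dd := by module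
      rw [e] at h1 h2
      rw [real_inner_smul_right] at h1
      rw [real_inner_smul_right, norm_smul, Real.norm_eq_abs, abs_of_pos (inv_pos.2 hL),
        mul_pow] at h2
      have e3 : ⟪G x, dd⟫ - ⟪g x, dd⟫ = ‖dd‖^2 := by
        rw [← inner_sub_left, ← hdd, real_inner_self_eq_norm_sq]
      have e3' : L⁻¹*⟪G x, dd⟫ - L⁻¹*⟪g x, dd⟫ = L⁻¹*‖dd‖^2 := by
        rw [← mul_sub, e3]
      linarith [h1, h2, e3']
    have hdd0 : ‖dd‖^2 ≤ 0 := by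
      have hL2 : 0 < L⁻¹ := inv_pos.2 hL
      have e4 : L/2 * (L⁻¹^2 * ‖dd‖^2) = (L⁻¹/2) * ‖dd‖^2 := by
        field_simp
      rw [e4] at hkey2
      nlinarith [hkey2]
    have hz : dd = 0 := by
      have := norm_nonneg dd
      have h5 : ‖dd‖ = 0 := by nlinarith
      exact norm_eq_zero.1 h5
    have h6 : G x - g x = 0 := by rw [← hdd]; exact hz
    exact (sub_eq_zero.1 h6).symm
  -- Lipschitz gradient
  have hco : ∀ x z, ⟪g x, z - x⟫ + 1/(2*L) * ‖g z - g x‖^2 ≤ Fm z - Fm x := by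
    intro x z
    set u : V := z - L⁻¹ • (g z - g x) with hu
    have h1 := hlower x u
    have h2 := hupper z u
    have e1 : u - z = -(L⁻¹ • (g z - g x)) := by rw [hu]; module
    have e2 : ‖u - z‖^2 = L⁻¹^2 * ‖g z - g x‖^2 := by
      rw [e1, norm_neg, norm_smul, Real.norm_eq_abs, abs_of_pos (inv_pos.2 hL), mul_pow]
    have e3 : ⟪g z, u - z⟫ = -(L⁻¹ * ⟪g z, g z - g x⟫) := by
      rw [e1, inner_neg_right, real_inner_smul_right]
    have e4 : ⟪g x, u - x⟫ = ⟪g x, z - x⟫ - L⁻¹ * ⟪g x, g z - g x⟫ := by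
      rw [show u - x = (z - x) - L⁻¹ • (g z - g x) by rw [hu]; module,
        inner_sub_right, real_inner_smul_right]
    have e5 : ⟪g z, g z - g x⟫ - ⟪g x, g z - g x⟫ = ‖g z - g x‖^2 := by
      rw [← inner_sub_left, real_inner_self_eq_norm_sq]
    have e6 : L/2 * (L⁻¹^2 * ‖g z - g x‖^2) = 1/(2*L) * ‖g z - g x‖^2 := by
      field_simp
    have e7 : L⁻¹ * ⟪g z, g z - g x⟫ - L⁻¹ * ⟪g x, g z - g x⟫
        = 2 * (1/(2*L) * ‖g z - g x‖^2) := by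
      rw [← mul_sub, e5]
      field_simp
    rw [e4] at h1
    rw [e2, e3] at h2
    linarith
  have hlip : ∀ a b, ‖g a - g b‖ ≤ L * ‖a - b‖ := by
    intro a b
    have h1 := hco a b
    have h2 := hco b a
    have e1 : ⟪g b, a - b⟫ = -⟪g b, b - a⟫ := by
      rw [show a - b = -(b-a) by abel, inner_neg_right]
    have e2 : ⟪g b - g a, b - a⟫ = ⟪g b, b-a⟫ - ⟪g a, b-a⟫ := inner_sub_left _ _ _
    have e3 : ‖g a - g b‖ = ‖g b - g a‖ := norm_sub_rev _ _
    rw [e1] at h2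
    have hmono : 2 * (1/(2*L) * ‖g b - g a‖^2) ≤ ⟪g b - g a, b - a⟫ := by
      rw [e2]
      rw [show ‖g a - g b‖ = ‖g b - g a‖ from norm_sub_rev _ _] at h2
      linarith
    have hcs : ⟪g b - g a, b - a⟫ ≤ ‖g b - g a‖ * ‖b - a‖ := real_inner_le_norm _ _
    have hD2 : ‖g b - g a‖^2 ≤ L * (‖g b - g a‖ * ‖b - a‖) := by
      have h3 := mul_le_mul_of_nonneg_left (hmono.trans hcs) hL.le
      have e4 : L * (2 * (1/(2*L) * ‖g b - g a‖^2)) = ‖g b - g a‖^2 := by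
        field_simp
      linarith [e4 ▸ h3]
    rw [e3, show ‖a - b‖ = ‖b - a‖ from norm_sub_rev _ _]
    rcases eq_or_lt_of_le (norm_nonneg (g b - g a)) with hD0 | hD0
    · rw [← hD0]
      positivity
    · nlinarith [hD2]
  refine ⟨Fm, g, fun x hx => ⟨hvalE x hx, hgradE x hx⟩, hlower, hupper, hlip⟩

lemma convexOn_of_subgrad {V : Type*} [NormedAddCommGroup V] [InnerProductSpace ℝ V]
    (F : V → ℝ) (g : V → V) (h : ∀ x z, ⟪g x, z - x⟫ ≤ F z - F x) :
    ConvexOn ℝ Set.univ F := by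
  refine ⟨convex_univ, ?_⟩
  intro x _ y _ a b ha hb hab
  set m := a • x + b • y with hm
  have hx := h m x
  have hy := h m y
  have hzero : a • (x - m) + b • (y - m) = 0 := by
    rw [hm]
    have : a • (x - (a • x + b • y)) + b • (y - (a • x + b • y))
        = (a + b) • (a • x + b • y) - (a+b) • (a • x + b • y) + ((1 - (a+b)) • (a • x) + (1 - (a+b)) • (b • y)) := by
      module
    rw [this, hab]
    module
  have hinner : a * ⟪g m, x - m⟫ + b * ⟪g m, y - m⟫ = 0 := by
    rw [← real_inner_smul_right, ← real_inner_smul_right, ← inner_add_right, hzero,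
      inner_zero_right]
  have h1 : a * ⟪g m, x - m⟫ ≤ a * (F x - F m) := mul_le_mul_of_nonneg_left (h m x) ha
  have h2 : b * ⟪g m, y - m⟫ ≤ b * (F y - F m) := mul_le_mul_of_nonneg_left (h m y) hb
  have : 0 ≤ a * (F x - F m) + b * (F y - F m) := by linarith
  have hab' : a * F m + b * F m = F m := by rw [← add_mul, hab, one_mul]
  simp only [smul_eq_mul]
  nlinarith [this]


section Helpers
variable {V : Type*} [NormedAddCommGroup V] [InnerProductSpace ℝ V]

lemma quad_expand (c : ℝ) (x z : V) :
    c/2*‖z‖^2 - c/2*‖x‖^2 - c*⟪x, z-x⟫ = c/2*‖z-x‖^2 := by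
  have e1 : ‖z - x‖^2 = ‖z‖^2 - 2*⟪z,x⟫ + ‖x‖^2 := norm_sub_sq_real z x
  have e2 : ⟪x, z - x⟫ = ⟪x,z⟫ - ⟪x,x⟫ := inner_sub_right _ _ _
  have e3 : ⟪x,z⟫ = ⟪z,x⟫ := real_inner_comm _ _
  have e4 : ⟪x,x⟫ = ‖x‖^2 := real_inner_self_eq_norm_sq _
  rw [e1, e2, e3, e4]
  ring
end Helpers

set_option maxHeartbeats 1000000 in
/-- Proposition 2.7 ('scprop'): jets satisfying the strong-convexity separation with
constant `η` and the Whitney compatibility `∼_M` admit an `(η/p)`-strongly convex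
`C^{1,1}` extension with `Lip(∇F) ≤ qM + η/p ≤ (q+1)M`.
Here `γ_x(z) = f x + ⟪G x, z - x⟫`. -/
theorem strongly_convex_jet_extension {n : ℕ}
    (E : Set (EuclideanSpace ℝ (Fin n))) (hE : IsClosed E)
    (f : EuclideanSpace ℝ (Fin n) → ℝ)
    (G : EuclideanSpace ℝ (Fin n) → EuclideanSpace ℝ (Fin n))
    (M η p q : ℝ) (hη : 0 < η) (hηM : η ≤ M)
    (hp : 1 < p) (hq : 1 < q) (hpq : 1 / p + 1 / q = 1)
    (hsep : ∀ x ∈ E, ∀ y ∈ E, y ≠ x →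
      f x + ⟪G x, y - x⟫ + (η / 2) * ‖y - x‖ ^ 2 ≤ f y)
    (hrel : ∀ x ∈ E, ∀ y ∈ E,
      f x - (f y + ⟪G y, x - y⟫) ≥ (1 / (2 * M)) * ‖G x - G y‖ ^ 2) :
    ∃ (F : EuclideanSpace ℝ (Fin n) → ℝ)
      (g : EuclideanSpace ℝ (Fin n) → EuclideanSpace ℝ (Fin n)),
      ConvexOn ℝ Set.univ (fun x => F x - ((η / p) / 2) * ‖x‖ ^ 2) ∧
      (∀ x, HasGradientAt F (g x) x) ∧
      (∀ x ∈ E, F x = f x ∧ g x = G x) ∧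
      (∀ a b, ‖g a - g b‖ ≤ (q * M + η / p) * ‖a - b‖) ∧
      q * M + η / p ≤ (q + 1) * M := by
  have hp0 : (0:ℝ) < p := lt_trans one_pos hp
  have hq0 : (0:ℝ) < q := lt_trans one_pos hq
  have hM0 : (0:ℝ) < M := lt_of_lt_of_le hη hηM
  have hqM0 : (0:ℝ) < q * M := mul_pos hq0 hM0
  have hη'0 : (0:ℝ) < η / p := div_pos hη hp0
  have hη'le : η / p ≤ η := by
    rw [div_le_iff₀ hp0]
    nlinarith
  have hlast : q * M + η / p ≤ (q + 1) * M := by nlinarith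
  rcases E.eq_empty_or_nonempty with rfl | hEne
  · -- empty case
    refine ⟨fun x => (η/p)/2*‖x‖^2, fun x => (η/p) • x, ?_, ?_, by simp, ?_, hlast⟩
    · have heq : (fun x : EuclideanSpace ℝ (Fin n) =>
          ((η/p)/2*‖x‖^2) - ((η/p)/2) * ‖x‖^2) = fun _ => (0:ℝ) := funext fun x => by ring
      rw [heq]
      exact convexOn_const 0 convex_univ
    · intro x
      apply hasGradientAt_of_squeeze _ _ _ ((η/p)/2) (by positivity)
      · intro z
        rw [real_inner_smul_left]
        have := quad_expand (η/p) x z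
        have h0 : (0:ℝ) ≤ (η/p)/2*‖z-x‖^2 := by positivity
        nlinarith [this]
      · intro z
        rw [real_inner_smul_left]
        have := quad_expand (η/p) x z
        nlinarith [this]
    · intro a b
      have e : (η/p) • a - (η/p) • b = (η/p) • (a - b) := by module
      rw [e, norm_smul, Real.norm_eq_abs, abs_of_pos hη'0]
      nlinarith [norm_nonneg (a - b)]
  · -- nonempty case
    set f' : EuclideanSpace ℝ (Fin n) → ℝ := fun x => f x - (η/p)/2*‖x‖^2 with hf'
    set G' : EuclideanSpace ℝ (Fin n) → EuclideanSpace ℝ (Fin n) :=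
      fun x => G x - (η/p) • x with hG'
    have keyshift : ∀ x ∈ E, ∀ y ∈ E,
        (1/(2*(q*M))) * ‖G' x - G' y‖^2 ≤ f' x - (f' y + ⟪G' y, x - y⟫) := by
      intro x hx y hy
      rcases eq_or_ne x y with rfl | hxy
      · simp
      · set A : ℝ := f x - f y - ⟪G y, x - y⟫ with hA
        set s : ℝ := ‖x - y‖^2 with hs
        set gg : ℝ := ‖G x - G y‖^2 with hgg
        set B : ℝ := ⟪G x - G y, x - y⟫ with hB
        have hs0 : 0 ≤ s := by positivity
        clear_value A s gg B
        have hA1 : (1/(2*M)) * gg ≤ A := by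
          have := hrel x hx y hy
          rw [hA, hgg]
          linarith
        have hsepA := hsep y hy x hx hxy
        have hsepB := hsep x hx y hy (Ne.symm hxy)
        have hA2 : (η/2) * s ≤ A := by
          rw [hA, hs]
          linarith
        have hmono : η * s ≤ B := by
          have e1 : ⟪G x, y - x⟫ = -⟪G x, x - y⟫ := by
            rw [show y - x = -(x - y) by abel, inner_neg_right]
          have e2 : ‖y - x‖ = ‖x - y‖ := norm_sub_rev _ _
          have e3 : B = ⟪G x, x - y⟫ - ⟪G y, x - y⟫ := by
            rw [hB]; exact inner_sub_left _ _ _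
          rw [e1, e2] at hsepB
          rw [e3, hs]
          linarith
        have hcomb : (1/q)*((1/(2*M))*gg) + (1/p)*((η/2)*s) ≤ A := by
          have w1 : (0:ℝ) ≤ 1/q := by positivity
          have w2 : (0:ℝ) ≤ 1/p := by positivity
          have m1 := mul_le_mul_of_nonneg_left hA1 w1
          have m2 := mul_le_mul_of_nonneg_left hA2 w2
          have hsum : (1/q)*A + (1/p)*A = A := by
            have h1 : (1/q) + (1/p) = 1 := by linarith
            calc (1/q)*A + (1/p)*A = ((1/q)+(1/p))*A := by ring
              _ = A := by rw [h1, one_mul]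
          linarith
        have eG : G' x - G' y = (G x - G y) - (η/p) • (x - y) := by
          simp only [hG']
          module
        have egg' : ‖G' x - G' y‖^2 = gg - 2*((η/p)*B) + (η/p)^2*s := by
          rw [eG, norm_sub_sq_real, real_inner_smul_right, norm_smul, Real.norm_eq_abs,
            abs_of_pos hη'0, mul_pow, ← hgg, ← hB, ← hs]
        have eLHS : f' x - (f' y + ⟪G' y, x - y⟫) = A - (η/p)/2 * s := by
          simp only [hf', hG']
          rw [inner_sub_left, real_inner_smul_left]
          have e1 : ‖x - y‖^2 = ‖x‖^2 - 2*⟪x,y⟫ + ‖y‖^2 := norm_sub_sq_real x y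
          have e2 : ⟪y, x - y⟫ = ⟪y,x⟫ - ⟪y,y⟫ := inner_sub_right _ _ _
          have e3 : ⟪y,x⟫ = ⟪x,y⟫ := real_inner_comm _ _
          have e4 : ⟪y,y⟫ = ‖y‖^2 := real_inner_self_eq_norm_sq _
          rw [hA, hs, e1, e2, e3, e4]
          ring
        rw [egg', eLHS]
        have c1 : (1/(2*(q*M))) * gg = (1/q)*((1/(2*M))*gg) := by
          field_simp
        have c2 : (η/p)/2 * s = (1/p)*((η/2)*s) := by
          field_simp
        have c3 := mul_le_mul_of_nonneg_left hmono
          (show (0:ℝ) ≤ (1/(2*(q*M))) * (2*(η/p)) by positivity)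
        have c4' : (η/p)^2 * s ≤ (2*(η/p))*(η*s) := by
          nlinarith [mul_nonneg (mul_nonneg (sub_nonneg.2 hη'le) hη'0.le) hs0]
        have c4 := mul_le_mul_of_nonneg_left c4'
          (show (0:ℝ) ≤ (1/(2*(q*M))) by positivity)
        linarith [c1, c2, c3, c4, hcomb]
    obtain ⟨F0, g0, hFE, hlow0, hup0, hlip0⟩ :=
      aux_ext E hEne f' G' (q*M) hqM0 keyshift
    refine ⟨fun x => F0 x + (η/p)/2*‖x‖^2, fun x => g0 x + (η/p) • x, ?_, ?_, ?_, ?_, hlast⟩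
    · have heq : (fun x : EuclideanSpace ℝ (Fin n) =>
          (F0 x + (η/p)/2*‖x‖^2) - ((η/p)/2) * ‖x‖^2) = F0 := funext fun x => by ring
      rw [heq]
      exact convexOn_of_subgrad F0 g0 hlow0
    · intro x
      apply hasGradientAt_of_squeeze _ _ _ ((q*M + η/p)/2) (by positivity)
      · intro z
        rw [inner_add_left, real_inner_smul_left]
        have hq1 := hlow0 x z
        have hq2 := quad_expand (η/p) x z
        have h0 : (0:ℝ) ≤ (η/p)/2*‖z-x‖^2 := by positivity
        nlinarith [hq1, hq2]
      · intro z
        rw [inner_add_left, real_inner_smul_left]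
        have hq1 := hup0 x z
        have hq2 := quad_expand (η/p) x z
        nlinarith [hq1, hq2]
    · intro x hx
      obtain ⟨hv, hg⟩ := hFE x hx
      constructor
      · show F0 x + (η/p)/2*‖x‖^2 = f x
        rw [hv]
        simp only [hf']
        ring
      · show g0 x + (η/p) • x = G x
        rw [hg]
        simp only [hG']
        module
    · intro a b
      have e : (g0 a + (η/p) • a) - (g0 b + (η/p) • b) = (g0 a - g0 b) + (η/p) • (a - b) := by
        module
      rw [e]
      refine le_trans (norm_add_le _ _) ?_
      rw [norm_smul, Real.norm_eq_abs, abs_of_pos hη'0]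
      have := hlip0 a b
      nlinarith [norm_nonneg (a - b)]
end

section
/- There exist E = {0,1} ⊂ ℝ, η ∈ (0, 1/4), f(0)=0, f(1)=η/2, and affine functions γ₀(x)=0, γ₁(x)=η/2 + 2η(x−1), such that γ₀ ∈ Γ^E_η(0; f), γ₁ ∈ Γ^E_η(1; f), and γ₀ ∼_1 γ₁, yet there exists no η-strongly convex function F ∈ C¹(ℝ) with J₀F = γ₀ and J₁F = γ₁. -/
/-- Key obstruction: for any `η > 0` there is no `η`-strongly convex differentiable
`F` with `F 0 = 0`, `F' 0 = 0`, `F 1 = η/2`, `F' 1 = 2η`. -/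
theorem no_strongly_convex_ext_aux (η : ℝ) (hη : 0 < η) :
    ¬ ∃ (F g : ℝ → ℝ),
        ConvexOn ℝ Set.univ (fun x => F x - (η / 2) * x ^ 2) ∧
        (∀ x, HasDerivAt F (g x) x) ∧
        F 0 = 0 ∧ g 0 = 0 ∧ F 1 = η / 2 ∧ g 1 = 2 * η := by
  rintro ⟨F, g, hconv, hderiv, hF0, hg0, hF1, hg1⟩
  set G : ℝ → ℝ := fun x => F x - (η / 2) * x ^ 2 with hGdef
  have hG : ∀ x, HasDerivAt G (g x - η * x) x := by
    intro x
    have h1 : HasDerivAt (fun x : ℝ => (η / 2) * x ^ 2) (η * x) x := by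
      have := (hasDerivAt_pow 2 x).const_mul (η / 2)
      refine this.congr_deriv ?_
      norm_num
      ring
    exact (hderiv x).sub h1
  have hG0 : G 0 = 0 := by simp [hGdef, hF0]
  have hG1 : G 1 = 0 := by simp [hGdef, hF1]
  -- Step A: G is nonnegative everywhere (support line of G at 0 is the zero line)
  have hGnonneg : ∀ y, 0 ≤ G y := by
    intro y
    set φ : ℝ → ℝ := fun t => G (t * y) with hφdef
    have hφ : HasDerivAt φ 0 0 := by
      have h2 : HasDerivAt (fun t : ℝ => t * y) y 0 := by
        simpa using (hasDerivAt_id (0 : ℝ)).mul_const y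
      have h3 := (hG (0 * y)).comp 0 h2
      have h4 : HasDerivAt φ ((g (0 * y) - η * (0 * y)) * y) 0 := h3
      simpa [hg0] using h4
    have hslope := hasDerivAt_iff_tendsto_slope.1 hφ
    have hslope' : Filter.Tendsto (slope φ 0) (nhdsWithin 0 (Set.Ioi 0)) (nhds 0) :=
      hslope.mono_left (nhdsWithin_mono _ (fun t ht => ne_of_gt ht))
    have hIoo : Set.Ioo (0 : ℝ) 1 ∈ nhdsWithin (0 : ℝ) (Set.Ioi 0) :=
      Ioo_mem_nhdsGT_of_mem (by norm_num)
    have hle : ∀ᶠ t in nhdsWithin (0 : ℝ) (Set.Ioi 0), slope φ 0 t ≤ G y := by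
      filter_upwards [hIoo] with t ht
      have h3 : G (t * y) ≤ t * G y := by
        have h4 := hconv.2 (Set.mem_univ (0 : ℝ)) (Set.mem_univ y)
          (by linarith [ht.2] : (0 : ℝ) ≤ 1 - t) (le_of_lt ht.1) (by ring)
        simpa [hG0, smul_eq_mul] using h4
      have h5 : slope φ 0 t = G (t * y) / t := by
        simp [slope_def_field, hφdef, hG0]
      rw [h5, div_le_iff₀ ht.1]
      have := mul_comm t (G y)
      linarith
    exact le_of_tendsto hslope' hle
  -- Step B: the two-sided derivative of G at 1 forces η ≤ 0
  have hG1' : HasDerivAt G η 1 := by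
    have := hG 1
    rw [hg1] at this
    convert this using 1
    ring
  have hslope := hasDerivAt_iff_tendsto_slope.1 hG1'
  have hslope' : Filter.Tendsto (slope G 1) (nhdsWithin 1 (Set.Iio 1)) (nhds η) :=
    hslope.mono_left (nhdsWithin_mono _ (fun t ht => ne_of_lt ht))
  have hle : ∀ᶠ t in nhdsWithin (1 : ℝ) (Set.Iio 1), slope G 1 t ≤ 0 := by
    filter_upwards [self_mem_nhdsWithin] with t ht
    have h5 : slope G 1 t = G t / (t - 1) := by
      simp [slope_def_field, hG1]
    rw [h5]
    exact div_nonpos_of_nonneg_of_nonpos (hGnonneg t) (by simp at ht; linarith)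
  have : η ≤ 0 := le_of_tendsto hslope' hle
  linarith

/-- The counterexample of Section 2.2: there exist `η ∈ (0, 1/4)`, `E = {0,1}`,
`f(0)=0`, `f(1)=η/2`, and affine jets `γ₀(x) = 0`, `γ₁(x) = η/2 + 2η(x-1)` satisfying
`γ₀ ∈ Γ^E_η(0;f)`, `γ₁ ∈ Γ^E_η(1;f)` and `γ₀ ∼_1 γ₁`, yet no `η`-strongly convex
differentiable function `F : ℝ → ℝ` has jets `J₀F = γ₀` and `J₁F = γ₁`. -/
theorem no_strongly_convex_extension_of_jets :
    ∃ η : ℝ, 0 < η ∧ η < 1 / 4 ∧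
    (let γ₀ : ℝ → ℝ := fun _ => 0
     let γ₁ : ℝ → ℝ := fun x => η / 2 + 2 * η * (x - 1)
     -- γ₀ ∈ Γ^E_η(0; f): γ₀(0) = f(0) = 0 and γ₀(1) + (η/2)|1-0|² ≤ f(1) = η/2
     (γ₀ 0 = 0 ∧ γ₀ 1 + (η / 2) * |(1 : ℝ) - 0| ^ 2 ≤ η / 2) ∧
     -- γ₁ ∈ Γ^E_η(1; f): γ₁(1) = f(1) = η/2 and γ₁(0) + (η/2)|0-1|² ≤ f(0) = 0
     (γ₁ 1 = η / 2 ∧ γ₁ 0 + (η / 2) * |(0 : ℝ) - 1| ^ 2 ≤ 0) ∧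
     -- γ₀ ∼₁ γ₁
     (γ₀ 0 - γ₁ 0 ≥ (1 / 2) * |(0 : ℝ) - 2 * η| ^ 2 ∧
      γ₁ 1 - γ₀ 1 ≥ (1 / 2) * |(0 : ℝ) - 2 * η| ^ 2) ∧
     -- no η-strongly convex differentiable F with J₀F = γ₀ and J₁F = γ₁
     ¬ ∃ (F g : ℝ → ℝ),
        ConvexOn ℝ Set.univ (fun x => F x - (η / 2) * x ^ 2) ∧
        (∀ x, HasDerivAt F (g x) x) ∧
        F 0 = 0 ∧ g 0 = 0 ∧ F 1 = η / 2 ∧ g 1 = 2 * η) := by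
  refine ⟨1 / 8, by norm_num, by norm_num, ?_⟩
  refine ⟨⟨rfl, by norm_num⟩, ⟨by norm_num, by norm_num [abs_of_nonpos]⟩,
    ⟨by norm_num [abs_of_nonpos], by norm_num [abs_of_nonpos]⟩, ?_⟩
  exact no_strongly_convex_ext_aux (1 / 8) (by norm_num)
end

section
/- Let E = {−2,−1,0,1,2} and f(x) = |x| on E. Any convex function F : ℝ → ℝ with F|_E = f satisfies F(x) = |x| for all x ∈ [−2,2]; in particular, no convex differentiable F : ℝ → ℝ extends f. -/
private lemma three_pt {F : ℝ → ℝ} (hF : ConvexOn ℝ Set.univ F) {a b c : ℝ}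
    (hab : a < b) (hbc : b < c) :
    (c - a) * F b ≤ (c - b) * F a + (b - a) * F c := by
  have hca : 0 < c - a := by linarith
  have hta : (0:ℝ) ≤ (c - b) / (c - a) := div_nonneg (by linarith) hca.le
  have htb : (0:ℝ) ≤ (b - a) / (c - a) := div_nonneg (by linarith) hca.le
  have hsum : (c - b) / (c - a) + (b - a) / (c - a) = 1 := by field_simp; ring
  have h1 := hF.2 (Set.mem_univ a) (Set.mem_univ c) hta htb hsum
  have hb : ((c - b) / (c - a)) • a + ((b - a) / (c - a)) • c = b := by
    rw [smul_eq_mul, smul_eq_mul, div_mul_eq_mul_div, div_mul_eq_mul_div, ← add_div, div_eq_iff hca.ne']; ring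
  rw [hb, smul_eq_mul, smul_eq_mul] at h1
  have h2 := mul_le_mul_of_nonneg_left h1 hca.le
  have h3 : (c - a) * ((c - b) / (c - a) * F a + (b - a) / (c - a) * F c)
      = (c - b) * F a + (b - a) * F c := by
    field_simp
  linarith [h3 ▸ h2]

private lemma key_lemma : ∀ F : ℝ → ℝ, ConvexOn ℝ Set.univ F →
    (∀ x ∈ ({-2, -1, 0, 1, 2} : Set ℝ), F x = |x|) →
    ∀ x ∈ Set.Icc (-2 : ℝ) 2, F x = |x| := by
  intro F hF hE x hx
  obtain ⟨hx1, hx2⟩ := hx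
  have v2 : F (-2) = 2 := by simpa using hE (-2) (by norm_num)
  have v1 : F (-1) = 1 := by simpa using hE (-1) (by norm_num)
  have v0 : F 0 = 0 := by simpa using hE 0 (by norm_num)
  have w1 : F 1 = 1 := by simpa using hE 1 (by norm_num)
  have w2 : F 2 = 2 := by simpa using hE 2 (by norm_num)
  rcases le_or_gt 0 x with hpos | hneg
  · rw [abs_of_nonneg hpos]
    rcases eq_or_lt_of_le hpos with h0 | h0
    · rw [← h0, v0]
    rcases eq_or_lt_of_le hx2 with h2 | h2
    · rw [h2, w2]
    have up : F x ≤ x := by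
      have := three_pt hF h0 h2
      rw [v0, w2] at this; linarith
    have low : x ≤ F x := by
      rcases lt_trichotomy x 1 with h | h | h
      · have := three_pt hF h (by norm_num : (1:ℝ) < 2)
        rw [w1, w2] at this; linarith
      · rw [h, w1]
      · have := three_pt hF (by norm_num : (0:ℝ) < 1) h
        rw [v0, w1] at this; linarith
    linarith
  · rw [abs_of_neg hneg]
    rcases eq_or_lt_of_le hx1 with h2 | h2
    · rw [← h2, v2]; norm_num
    have up : F x ≤ -x := by
      have := three_pt hF h2 hneg
      rw [v0, v2] at this; linarith
    have low : -x ≤ F x := by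
      rcases lt_trichotomy x (-1) with h | h | h
      · have := three_pt hF h (by norm_num : (-1:ℝ) < 0)
        rw [v1, v0] at this; linarith
      · rw [h, v1]; norm_num
      · have := three_pt hF (by norm_num : (-2:ℝ) < -1) h
        rw [v1, v2] at this; linarith
    linarith

/-- Sharpness example: any convex extension of `f(x) = |x|` from `E = {-2,-1,0,1,2}`
equals `|x|` on `[-2,2]`; in particular no convex differentiable extension exists. -/
theorem convex_extension_of_abs_is_abs :
    (∀ F : ℝ → ℝ, ConvexOn ℝ Set.univ F →
      (∀ x ∈ ({-2, -1, 0, 1, 2} : Set ℝ), F x = |x|) →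
      ∀ x ∈ Set.Icc (-2 : ℝ) 2, F x = |x|) ∧
    ¬ ∃ F : ℝ → ℝ, ConvexOn ℝ Set.univ F ∧ Differentiable ℝ F ∧
      ∀ x ∈ ({-2, -1, 0, 1, 2} : Set ℝ), F x = |x| := by
  refine ⟨key_lemma, ?_⟩
  rintro ⟨F, hconv, hdiff, hE⟩
  have heq := key_lemma F hconv hE
  have hnhds : Set.Icc (-2 : ℝ) 2 ∈ nhds (0 : ℝ) :=
    Icc_mem_nhds (by norm_num) (by norm_num)
  have hev : F =ᶠ[nhds (0:ℝ)] (fun x => |x|) :=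
    Filter.eventuallyEq_of_mem hnhds heq
  have : DifferentiableAt ℝ (fun x : ℝ => |x|) 0 :=
    hev.differentiableAt_iff.mp (hdiff 0)
  exact not_differentiableAt_abs_zero this
end

section
/- Let x < y < z in ℝ, and let γ_x, γ_y, γ_z be affine with γ_x ∼_M γ_y and γ_y ∼_M γ_z. Then (γ_z' − γ_x')²/(2M) ≤ γ_x(x) − γ_z(x) follows from the identity γ_x(x) − γ_z(x) = (γ_y(y) − γ_z(y)) + (γ_x(x) − γ_y(x)) + (γ_z' − γ_y')(x − y) together with the bound γ_y' − γ_x' ≤ M(y − x), because x − y + (γ_y' − γ_x')/M ≤ 0 and γ_z' − γ_y' ≥ 0. -/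
/-- The key computation (4.2) inside the one-dimensional transitivity lemma:
for ordered points and ordered slopes, `(γ_z' − γ_x')²/(2M) ≤ γ_x(x) − γ_z(x)`.
An affine function with base point `a` is `t ↦ p + s * (t - a)`. -/
theorem transitivity_key_computation (M : ℝ) (hM : 0 < M)
    (x y z : ℝ) (hxy : x < y) (hyz : y < z)
    (px py pz sx sy sz : ℝ)
    (hslopes : sx ≤ sy ∧ sy ≤ sz)
    (hxy1 : px - (py + sy * (x - y)) ≥ (1 / (2 * M)) * (sx - sy) ^ 2)
    (hxy2 : py - (px + sx * (y - x)) ≥ (1 / (2 * M)) * (sx - sy) ^ 2)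
    (hyz1 : py - (pz + sz * (y - z)) ≥ (1 / (2 * M)) * (sy - sz) ^ 2)
    (hyz2 : pz - (py + sy * (z - y)) ≥ (1 / (2 * M)) * (sy - sz) ^ 2) :
    (sz - sx) ^ 2 / (2 * M) ≤ px - (pz + sz * (x - z)) := by
  obtain ⟨h1, h2⟩ := hslopes
  have hM' : (0:ℝ) < 2 * M := by linarith
  have e1 : (1 / (2 * M)) * (sx - sy) ^ 2 = (sx - sy) ^ 2 / (2 * M) := by ring
  have e2 : (1 / (2 * M)) * (sy - sz) ^ 2 = (sy - sz) ^ 2 / (2 * M) := by ring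
  rw [e1] at hxy1 hxy2
  rw [e2] at hyz1
  have A : (sy - sz) ^ 2 ≤ (py - (pz + sz * (y - z))) * (2 * M) :=
    (div_le_iff₀ hM').mp hyz1
  have B : (sx - sy) ^ 2 ≤ (px - (py + sy * (x - y))) * (2 * M) :=
    (div_le_iff₀ hM').mp hxy1
  have C : (sx - sy) ^ 2 ≤ (py - (px + sx * (y - x))) * (2 * M) :=
    (div_le_iff₀ hM').mp hxy2
  -- sy - sx ≤ M * (y - x)
  have key : sy - sx ≤ M * (y - x) := by
    rcases eq_or_lt_of_le h1 with h | h
    · nlinarith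
    · nlinarith [mul_pos hM (sub_pos.2 h)]
  have key2 : (sz - sy) * (sy - sx) ≤ (sz - sy) * (M * (y - x)) :=
    mul_le_mul_of_nonneg_left key (sub_nonneg.2 h2)
  rw [div_le_iff₀ hM']
  nlinarith [key2]
end
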